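/- On ℝ⁵ with coordinates (x,y,z,a,b), let Z₁ = ∂x + a∂z, Z₂ = ∂y + b∂z, Z₃ = −3∂b, Z₄ = ∂a, and for u ∈ ℝ let W(u) = Z₁ + uZ₂ + u²Z₃ + u³Z₄ (the twisted-cubic field of the stringent G₂ man{oe}uvre). Define Y₁ = W(0), Y₂ = W(1), Y₃ = W(−1), Y₄ = W(2). Then: (i) the Lie bracket satisfies [Y₂, Y₁] = ∂z; (ii) at every point p ∈ ℝ⁵ the five vectors Y₁(p), Y₂(p), Y₃(p), Y₄(p), ∂z(p) form a basis of ℝ⁵. In particular the family {Y₁, Y₂, Y₃, Y₄} is bracket generating at every point of ℝ⁵. -/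

import Mathlib

noncomputable section

/-- Points of `ℝ⁵` with coordinates `(x,y,z,a,b) = (p 0, p 1, p 2, p 3, p 4)`. -/
abbrev Pt := Fin 5 → ℝ

/-- Vector fields on `ℝ⁵`. -/
abbrev VF := Pt → Pt

/-- Lie bracket of vector fields: `[V,W](p) = (DW)_p(V(p)) − (DV)_p(W(p))`. -/
def lieBracket (V W : VF) : VF := fun p => fderiv ℝ W p (V p) - fderiv ℝ V p (W p)

/-- `Z₁ = ∂x + a∂z`. -/
def Z1 : VF := fun p => ![1, 0, p 3, 0, 0]
/-- `Z₂ = ∂y + b∂z`. -/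
def Z2 : VF := fun p => ![0, 1, p 4, 0, 0]
/-- `Z₃ = −3∂b`. -/
def Z3 : VF := fun _ => ![0, 0, 0, 0, -3]
/-- `Z₄ = ∂a`. -/
def Z4 : VF := fun _ => ![0, 0, 0, 1, 0]

/-- The twisted-cubic field `W(u) = Z₁ + uZ₂ + u²Z₃ + u³Z₄` of the stringent
`G₂` man\oe uvre. -/
def Wc (u : ℝ) : VF := fun p => Z1 p + u • Z2 p + u ^ 2 • Z3 p + u ^ 3 • Z4 p

def Y1 : VF := Wc 0
def Y2 : VF := Wc 1
def Y3 : VF := Wc (-1)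
def Y4 : VF := Wc 2

/-- Derivative of `Y₁`. -/
def L1 : Pt →L[ℝ] Pt := (ContinuousLinearMap.proj 3 : Pt →L[ℝ] ℝ).smulRight ![0,0,1,0,0]
/-- Derivative of `Y₂`. -/
def L2 : Pt →L[ℝ] Pt :=
  ((ContinuousLinearMap.proj 3 : Pt →L[ℝ] ℝ) + ContinuousLinearMap.proj 4).smulRight ![0,0,1,0,0]

lemma Y1_eq : Y1 = fun p => ![1,0,0,0,0] + L1 p := by
  funext p i
  fin_cases i <;> simp [Y1, Wc, Z1, Z2, Z3, Z4, L1]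

lemma Y2_eq : Y2 = fun p => ![1,1,0,1,-3] + L2 p := by
  funext p i
  fin_cases i <;> simp [Y2, Wc, Z1, Z2, Z3, Z4, L2]

lemma fderiv_Y1 (p : Pt) : fderiv ℝ Y1 p = L1 := by
  rw [Y1_eq]; exact (L1.hasFDerivAt.const_add _).fderiv

lemma fderiv_Y2 (p : Pt) : fderiv ℝ Y2 p = L2 := by
  rw [Y2_eq]; exact (L2.hasFDerivAt.const_add _).fderiv

lemma bracket_eq : lieBracket Y2 Y1 = (fun _ => ![0, 0, 1, 0, 0]) := by
  funext p i
  rw [lieBracket, fderiv_Y1, fderiv_Y2]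
  fin_cases i <;> simp [L1, L2, Y1, Y2, Wc, Z1, Z2, Z3, Z4]

lemma det_eq (p : Pt) :
    (Matrix.of ![Y1 p, Y2 p, Y3 p, Y4 p, ![0, 0, 1, 0, 0]]).det = 36 := by
  simp [Matrix.det_succ_row_zero, Fin.sum_univ_succ, Y1, Y2, Y3, Y4, Wc, Z1, Z2, Z3, Z4,
    Fin.succAbove, Fin.castSucc, Fin.castAdd, Fin.castLE]
  ring

lemma li (p : Pt) :
    LinearIndependent ℝ ![Y1 p, Y2 p, Y3 p, Y4 p, ![0, 0, 1, 0, 0]] := by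
  have h : IsUnit (Matrix.of ![Y1 p, Y2 p, Y3 p, Y4 p, ![0, 0, 1, 0, 0]]) := by
    rw [Matrix.isUnit_iff_isUnit_det]
    rw [det_eq p]
    exact isUnit_iff_ne_zero.mpr (by norm_num)
  exact Matrix.linearIndependent_rows_iff_isUnit.mpr h

/-- The stringent `G₂`-mode control fields `Yᵢ = W(uᵢ)`, `uᵢ ∈ {0,1,−1,2}`, satisfy
`[Y₂,Y₁] = ∂z`, and at every point `Y₁,Y₂,Y₃,Y₄,∂z` form a basis of `ℝ⁵`:
the family `{Y₁,…,Y₄}` is bracket generating. -/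
theorem G2_mode_bracket_generating :
    lieBracket Y2 Y1 = (fun _ => ![0, 0, 1, 0, 0]) ∧
    (∀ p : Pt,
      LinearIndependent ℝ ![Y1 p, Y2 p, Y3 p, Y4 p, ![0, 0, 1, 0, 0]] ∧
      Submodule.span ℝ
        ({Y1 p, Y2 p, Y3 p, Y4 p, ![0, 0, 1, 0, 0]} : Set (Fin 5 → ℝ)) = ⊤) := by
  refine ⟨bracket_eq, fun p => ⟨li p, ?_⟩⟩
  have h := (li p).span_eq_top_of_card_eq_finrank
    (by simp [Module.finrank_pi])
  rw [← h]
  congr 1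
  ext v
  simp [Matrix.range_cons, Matrix.range_empty]
  tauto
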